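/- Let T be a set, 𝒜 a collection of subsets of T closed under countable intersections, and d a pseudometric on 𝒜 that is outer continuous and has the midpoint property. Then for all A₀, A₁ ∈ 𝒜 with A₀ ⊆ A₁, A₀ ≠ A₁ and d(A₀, A₁) > 0, there exists a map γ : [0,1] → Set T such that γ(x) ∈ 𝒜 for every x ∈ [0,1], γ(0) = A₀, γ(1) = A₁, γ(x) ⊆ γ(y) whenever 0 ≤ x ≤ y ≤ 1, and d(γ(x), γ(y)) = d(A₀, A₁)·|x − y| for all x, y ∈ [0,1] (an increasing constant-speed geodesic from A₀ to A₁). -/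

import Mathlib

open Filter Topology

open Classical in
noncomputable def midSet {T : Type*} (𝒜 : Set (Set T)) (d : Set T → Set T → ℝ)
    (A B : Set T) : Set T :=
  if h : ∃ C ∈ 𝒜, A ⊆ C ∧ C ⊆ B ∧ d A C = d A B / 2 ∧ d C B = d A B / 2
  then h.choose else A

open Classical in
theorem midSet_spec {T : Type*} {𝒜 : Set (Set T)} {d : Set T → Set T → ℝ} {A B : Set T}
    (h : ∃ C ∈ 𝒜, A ⊆ C ∧ C ⊆ B ∧ d A C = d A B / 2 ∧ d C B = d A B / 2) :
    midSet 𝒜 d A B ∈ 𝒜 ∧ A ⊆ midSet 𝒜 d A B ∧ midSet 𝒜 d A B ⊆ B ∧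
      d A (midSet 𝒜 d A B) = d A B / 2 ∧ d (midSet 𝒜 d A B) B = d A B / 2 := by
  rw [midSet, dif_pos h]
  exact h.choose_spec

noncomputable def dyad {T : Type*} (𝒜 : Set (Set T)) (d : Set T → Set T → ℝ)
    (A₀ A₁ : Set T) : ℕ → ℕ → Set T
  | 0, k => if k = 0 then A₀ else A₁
  | n+1, k =>
      if k % 2 = 0 then dyad 𝒜 d A₀ A₁ n (k / 2)
      else midSet 𝒜 d (dyad 𝒜 d A₀ A₁ n (k / 2)) (dyad 𝒜 d A₀ A₁ n (k / 2 + 1))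

theorem dyad_double {T : Type*} (𝒜 : Set (Set T)) (d : Set T → Set T → ℝ)
    (A₀ A₁ : Set T) (n k : ℕ) : dyad 𝒜 d A₀ A₁ (n+1) (2*k) = dyad 𝒜 d A₀ A₁ n k := by
  simp [dyad, Nat.mul_mod_right, Nat.mul_div_cancel_left k (two_pos)]

theorem dyad_zero {T : Type*} (𝒜 : Set (Set T)) (d : Set T → Set T → ℝ)
    (A₀ A₁ : Set T) (n : ℕ) : dyad 𝒜 d A₀ A₁ n 0 = A₀ := by
  induction n with
  | zero => simp [dyad]
  | succ n ih => simpa [dyad] using ih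

theorem dyad_top {T : Type*} (𝒜 : Set (Set T)) (d : Set T → Set T → ℝ)
    (A₀ A₁ : Set T) (n : ℕ) : dyad 𝒜 d A₀ A₁ n (2^n) = A₁ := by
  induction n with
  | zero => simp [dyad]
  | succ n ih =>
      have : (2:ℕ)^(n+1) = 2 * 2^n := by ring
      rw [this, dyad_double, ih]

section core
variable {T : Type*} (𝒜 : Set (Set T))
    (d : Set T → Set T → ℝ)
    (hnn : ∀ A ∈ 𝒜, ∀ B ∈ 𝒜, 0 ≤ d A B)
    (hsymm : ∀ A ∈ 𝒜, ∀ B ∈ 𝒜, d A B = d B A)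
    (htri : ∀ A ∈ 𝒜, ∀ B ∈ 𝒜, ∀ C ∈ 𝒜, d A C ≤ d A B + d B C)
    (hrefl : ∀ A ∈ 𝒜, d A A = 0)
    (hmid : ∀ A ∈ 𝒜, ∀ A' ∈ 𝒜, A ⊆ A' → ∃ A'' ∈ 𝒜, A ⊆ A'' ∧ A'' ⊆ A' ∧
      d A A'' = d A A' / 2 ∧ d A'' A' = d A A' / 2)
    (A₀ A₁ : Set T) (h₀ : A₀ ∈ 𝒜) (h₁ : A₁ ∈ 𝒜) (hsub : A₀ ⊆ A₁)

include hmid h₀ h₁ hsub in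
theorem dyad_basic : ∀ n : ℕ, (∀ k ≤ 2^n, dyad 𝒜 d A₀ A₁ n k ∈ 𝒜) ∧
    (∀ k < 2^n, dyad 𝒜 d A₀ A₁ n k ⊆ dyad 𝒜 d A₀ A₁ n (k+1) ∧
      d (dyad 𝒜 d A₀ A₁ n k) (dyad 𝒜 d A₀ A₁ n (k+1)) = d A₀ A₁ / 2^n) := by
  intro n
  induction n with
  | zero =>
      constructor
      · intro k hk
        interval_cases k <;> simp [dyad, h₀, h₁]
      · intro k hk
        interval_cases k
        simp [dyad, hsub]
  | succ n ih =>
      have key : ∀ j < 2^n, ∃ C ∈ 𝒜, dyad 𝒜 d A₀ A₁ n j ⊆ C ∧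
          C ⊆ dyad 𝒜 d A₀ A₁ n (j+1) ∧
          d (dyad 𝒜 d A₀ A₁ n j) C = d (dyad 𝒜 d A₀ A₁ n j) (dyad 𝒜 d A₀ A₁ n (j+1)) / 2 ∧
          d C (dyad 𝒜 d A₀ A₁ n (j+1)) = d (dyad 𝒜 d A₀ A₁ n j) (dyad 𝒜 d A₀ A₁ n (j+1)) / 2 := by
        intro j hj
        exact hmid _ (ih.1 j hj.le) _ (ih.1 (j+1) hj) (ih.2 j hj).1
      constructor
      · intro k hk
        rcases Nat.even_or_odd k with ⟨j, hje⟩ | ⟨j, hjo⟩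
        · subst hje
          rw [← two_mul, dyad_double]
          exact ih.1 j (by omega)
        · subst hjo
          have hj : j < 2^n := by
            have : 2*j+1 ≤ 2^(n+1) := hk
            have : (2:ℕ)^(n+1) = 2*2^n := by ring
            omega
          have hodd : (2*j+1) % 2 = 1 := by omega
          have hdiv : (2*j+1) / 2 = j := by omega
          show dyad 𝒜 d A₀ A₁ (n+1) (2*j+1) ∈ 𝒜
          rw [show dyad 𝒜 d A₀ A₁ (n+1) (2*j+1) =
              midSet 𝒜 d (dyad 𝒜 d A₀ A₁ n j) (dyad 𝒜 d A₀ A₁ n (j+1)) by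
            simp [dyad, hodd, hdiv]]
          exact (midSet_spec (key j hj)).1
      · intro k hk
        have h2 : (2:ℕ)^(n+1) = 2*2^n := by ring
        rcases Nat.even_or_odd k with ⟨j, hje⟩ | ⟨j, hjo⟩
        · subst hje
          have hj : j < 2^n := by omega
          have hodd : (2*j+1) % 2 = 1 := by omega
          have hdiv : (2*j+1) / 2 = j := by omega
          have e1 : dyad 𝒜 d A₀ A₁ (n+1) (j+j) = dyad 𝒜 d A₀ A₁ n j := by
            rw [← two_mul, dyad_double]
          have e2 : dyad 𝒜 d A₀ A₁ (n+1) (j+j+1) =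
              midSet 𝒜 d (dyad 𝒜 d A₀ A₁ n j) (dyad 𝒜 d A₀ A₁ n (j+1)) := by
            rw [show j+j+1 = 2*j+1 by ring]
            simp [dyad, hodd, hdiv]
          rw [e1, e2]
          obtain ⟨_, hsub', _, hd1, _⟩ := midSet_spec (key j hj)
          refine ⟨hsub', ?_⟩
          rw [hd1, (ih.2 j hj).2]
          ring
        · subst hjo
          have hj : j < 2^n := by omega
          have hodd : (2*j+1) % 2 = 1 := by omega
          have hdiv : (2*j+1) / 2 = j := by omega
          have e2 : dyad 𝒜 d A₀ A₁ (n+1) (2*j+1) =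
              midSet 𝒜 d (dyad 𝒜 d A₀ A₁ n j) (dyad 𝒜 d A₀ A₁ n (j+1)) := by
            simp [dyad, hodd, hdiv]
          have e3 : dyad 𝒜 d A₀ A₁ (n+1) (2*j+1+1) = dyad 𝒜 d A₀ A₁ n (j+1) := by
            rw [show 2*j+1+1 = 2*(j+1) by ring, dyad_double]
          rw [e2, e3]
          obtain ⟨_, _, hsub', _, hd2⟩ := midSet_spec (key j hj)
          refine ⟨hsub', ?_⟩
          rw [hd2, (ih.2 j hj).2]
          ring

include hmid h₀ h₁ hsub in
theorem dyad_mono : ∀ n l k : ℕ, k ≤ l → l ≤ 2^n →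
    dyad 𝒜 d A₀ A₁ n k ⊆ dyad 𝒜 d A₀ A₁ n l := by
  intro n l
  induction l with
  | zero =>
      intro k hk _
      obtain rfl : k = 0 := by omega
      exact subset_rfl
  | succ l ih =>
      intro k hk hl
      rcases eq_or_lt_of_le hk with rfl | hk'
      · exact subset_rfl
      · exact (ih k (by omega) (by omega)).trans
          ((dyad_basic 𝒜 d hmid A₀ A₁ h₀ h₁ hsub n).2 l (by omega)).1

include hnn hsymm htri hrefl hmid h₀ h₁ hsub in
theorem dyad_dist : ∀ n k l : ℕ, k ≤ l → l ≤ 2^n →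
    d (dyad 𝒜 d A₀ A₁ n k) (dyad 𝒜 d A₀ A₁ n l) = ((l:ℝ) - k) / 2^n * d A₀ A₁ := by
  have hB := dyad_basic 𝒜 d hmid A₀ A₁ h₀ h₁ hsub
  have hle : ∀ n l k : ℕ, k ≤ l → l ≤ 2^n →
      d (dyad 𝒜 d A₀ A₁ n k) (dyad 𝒜 d A₀ A₁ n l) ≤ ((l:ℝ) - k) / 2^n * d A₀ A₁ := by
    intro n l
    induction l with
    | zero =>
        intro k hk _
        have hk0 : k = 0 := by omega
        subst hk0
        simp [hrefl _ ((hB n).1 0 (by positivity))]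
    | succ l ih =>
        intro k hk hl
        rcases eq_or_lt_of_le hk with rfl | hk'
        · rw [hrefl _ ((hB n).1 _ hl)]
          simp
        · have h1 := ih k (by omega) (by omega)
          have h2 := ((hB n).2 l (by omega)).2
          have htr := htri _ ((hB n).1 k (by omega)) _ ((hB n).1 l (by omega)) _
            ((hB n).1 (l+1) hl)
          have hpow : (0:ℝ) < 2^n := by positivity
          push_cast
          rw [h2] at htr
          have : ((l:ℝ) + 1 - k)/2^n * d A₀ A₁ = ((l:ℝ) - k)/2^n * d A₀ A₁ + d A₀ A₁/2^n := by
            field_simp; ring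
          rw [this]
          linarith
  intro n k l hkl hl
  have h1 := hle n l k hkl hl
  have h2 := hle n k 0 (Nat.zero_le _) (by omega)
  have h3 := hle n (2^n) l hl le_rfl
  have htot : d (dyad 𝒜 d A₀ A₁ n 0) (dyad 𝒜 d A₀ A₁ n (2^n)) = d A₀ A₁ := by
    rw [dyad_zero, dyad_top]
  have ht1 := htri _ ((hB n).1 0 (by positivity)) _ ((hB n).1 k (by omega)) _
    ((hB n).1 (2^n) le_rfl)
  have ht2 := htri _ ((hB n).1 k (by omega)) _ ((hB n).1 l hl) _
    ((hB n).1 (2^n) le_rfl)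
  have hpow : (0:ℝ) < 2^n := by positivity
  have hcast : ((2^n : ℕ) : ℝ) = 2^n := by push_cast; ring
  rw [htot] at ht1
  rw [hcast] at h3
  simp only [Nat.cast_zero, sub_zero] at h2
  have hlk : (k:ℝ) ≤ l := by exact_mod_cast hkl
  have hl2 : (l:ℝ) ≤ 2^n := by
    have := hl
    calc (l:ℝ) ≤ ((2^n : ℕ):ℝ) := by exact_mod_cast hl
    _ = 2^n := hcast
  refine le_antisymm h1 ?_
  have h2' : d (dyad 𝒜 d A₀ A₁ n 0) (dyad 𝒜 d A₀ A₁ n k) * 2^n ≤ (k:ℝ) * d A₀ A₁ := by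
    rw [div_mul_eq_mul_div] at h2
    calc _ ≤ ((k:ℝ) - 0) * d A₀ A₁ / 2^n * 2^n := by
          exact mul_le_mul_of_nonneg_right (by simpa using h2) hpow.le
      _ = (k:ℝ) * d A₀ A₁ := by field_simp; ring
  have h3' : d (dyad 𝒜 d A₀ A₁ n l) (dyad 𝒜 d A₀ A₁ n (2^n)) * 2^n ≤ (2^n - (l:ℝ)) * d A₀ A₁ := by
    rw [div_mul_eq_mul_div] at h3
    calc _ ≤ (2^n - (l:ℝ)) * d A₀ A₁ / 2^n * 2^n := mul_le_mul_of_nonneg_right h3 hpow.le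
      _ = (2^n - (l:ℝ)) * d A₀ A₁ := by field_simp
  have H1 := mul_le_mul_of_nonneg_right ht1 hpow.le
  have H2 := mul_le_mul_of_nonneg_right ht2 hpow.le
  rw [add_mul] at H1 H2
  rw [div_mul_eq_mul_div, div_le_iff₀ hpow]
  linarith

end core


/-- **Existence of increasing constant-speed geodesics.**
Let `𝒜` be a collection of subsets of `T` closed under countable intersections and `d` a
pseudometric on `𝒜` that is outer continuous and has the midpoint property. Then for all
`A₀ ⊆ A₁` in `𝒜` with `A₀ ≠ A₁` and `d A₀ A₁ > 0`, there exists an increasing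
constant-speed geodesic `γ : [0,1] → 𝒜` from `A₀` to `A₁`. -/
theorem stmt_4 {T : Type*} (𝒜 : Set (Set T))
    (hcap : ∀ As : ℕ → Set T, (∀ n, As n ∈ 𝒜) → (⋂ n, As n) ∈ 𝒜)
    (d : Set T → Set T → ℝ)
    (hnn : ∀ A ∈ 𝒜, ∀ B ∈ 𝒜, 0 ≤ d A B)
    (hsymm : ∀ A ∈ 𝒜, ∀ B ∈ 𝒜, d A B = d B A)
    (htri : ∀ A ∈ 𝒜, ∀ B ∈ 𝒜, ∀ C ∈ 𝒜, d A C ≤ d A B + d B C)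
    (hrefl : ∀ A ∈ 𝒜, d A A = 0)
    (houter : ∀ As : ℕ → Set T, (∀ n, As n ∈ 𝒜) → (∀ n, As (n + 1) ⊆ As n) →
      (⋂ n, As n) ∈ 𝒜 →
      Filter.Tendsto (fun n => d (As n) (⋂ n, As n)) Filter.atTop (nhds 0))
    (hmid : ∀ A ∈ 𝒜, ∀ A' ∈ 𝒜, A ⊆ A' → ∃ A'' ∈ 𝒜, A ⊆ A'' ∧ A'' ⊆ A' ∧
      d A A'' = d A A' / 2 ∧ d A'' A' = d A A' / 2)
    (A₀ A₁ : Set T) (h₀ : A₀ ∈ 𝒜) (h₁ : A₁ ∈ 𝒜)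
    (hsub : A₀ ⊆ A₁) (hne : A₀ ≠ A₁) (hd : 0 < d A₀ A₁) :
    ∃ γ : ℝ → Set T,
      (∀ x ∈ Set.Icc (0 : ℝ) 1, γ x ∈ 𝒜) ∧
      γ 0 = A₀ ∧ γ 1 = A₁ ∧
      (∀ x ∈ Set.Icc (0 : ℝ) 1, ∀ y ∈ Set.Icc (0 : ℝ) 1, x ≤ y → γ x ⊆ γ y) ∧
      (∀ x ∈ Set.Icc (0 : ℝ) 1, ∀ y ∈ Set.Icc (0 : ℝ) 1,
        d (γ x) (γ y) = d A₀ A₁ * |x - y|) := by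
  classical
  have hB := dyad_basic 𝒜 d hmid A₀ A₁ h₀ h₁ hsub
  have hMono := dyad_mono 𝒜 d hmid A₀ A₁ h₀ h₁ hsub
  have hDist := dyad_dist 𝒜 d hnn hsymm htri hrefl hmid A₀ A₁ h₀ h₁ hsub
  set f : ℕ → ℕ → Set T := dyad 𝒜 d A₀ A₁ with hfdef
  have fdouble : ∀ n k, f (n+1) (2*k) = f n k := fun n k => dyad_double 𝒜 d A₀ A₁ n k
  have fzero : ∀ n, f n 0 = A₀ := fun n => dyad_zero 𝒜 d A₀ A₁ n
  have ftop : ∀ n, f n (2^n) = A₁ := fun n => dyad_top 𝒜 d A₀ A₁ n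
  set c : ℝ → ℝ := fun x => max 0 (min 1 x) with hcdef
  have hcx : ∀ x ∈ Set.Icc (0:ℝ) 1, c x = x := by
    intro x hx
    simp only [hcdef]
    rw [min_eq_right hx.2, max_eq_right hx.1]
  have hc0 : ∀ x, 0 ≤ c x := fun x => le_max_left _ _
  have hc1 : ∀ x, c x ≤ 1 := fun x => max_le zero_le_one (min_le_left _ _)
  have hcmono : ∀ x y : ℝ, x ≤ y → c x ≤ c y := by
    intro x y hxy
    exact max_le_max le_rfl (min_le_min le_rfl hxy)
  set K : ℕ → ℝ → ℕ := fun n x => ⌈c x * 2 ^ n⌉₊ with hKdef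
  have hKle : ∀ n x, K n x ≤ 2^n := by
    intro n x
    refine Nat.ceil_le.mpr ?_
    calc c x * 2^n ≤ 1 * 2^n :=
          mul_le_mul_of_nonneg_right (hc1 x) (by positivity)
      _ = ((2^n : ℕ):ℝ) := by push_cast; ring
  have hKdouble : ∀ n x, K (n+1) x ≤ 2 * K n x := by
    intro n x
    refine Nat.ceil_le.mpr ?_
    have h := Nat.le_ceil (c x * 2^n)
    push_cast
    calc c x * 2^(n+1) = (c x * 2^n) * 2 := by ring
      _ ≤ (⌈c x * 2^n⌉₊ : ℝ) * 2 := mul_le_mul_of_nonneg_right h (by norm_num)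
      _ = 2 * (⌈c x * 2^n⌉₊ : ℝ) := by ring
  have hKmono : ∀ n (x y : ℝ), x ≤ y → K n x ≤ K n y := by
    intro n x y hxy
    exact Nat.ceil_le_ceil (mul_le_mul_of_nonneg_right (hcmono x y hxy) (by positivity))
  set γ : ℝ → Set T := fun x => ⋂ n, f n (K n x) with hγdef
  have hAnti : ∀ (x : ℝ) (n : ℕ), f (n+1) (K (n+1) x) ⊆ f n (K n x) := by
    intro x n
    have h2 : 2 * K n x ≤ 2^(n+1) := by
      have := hKle n x
      have hp : (2:ℕ)^(n+1) = 2 * 2^n := by ring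
      omega
    have h1 : f (n+1) (K (n+1) x) ⊆ f (n+1) (2 * K n x) :=
      hMono (n+1) (2*K n x) (K (n+1) x) (hKdouble n x) h2
    rwa [fdouble] at h1
  have hγmem : ∀ x, γ x ∈ 𝒜 := fun x => hcap _ (fun n => (hB n).1 _ (hKle n x))
  have hγtend : ∀ x, Filter.Tendsto (fun n => d (f n (K n x)) (γ x)) Filter.atTop (nhds 0) :=
    fun x => houter _ (fun n => (hB n).1 _ (hKle n x)) (fun n => hAnti x n) (hγmem x)
  have hγ0 : γ 0 = A₀ := by
    have hK0 : ∀ n, K n 0 = 0 := by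
      intro n
      simp [hKdef, hcdef]
    simp only [hγdef, hK0, fzero, Set.iInter_const]
  have hγ1 : γ 1 = A₁ := by
    have hK1 : ∀ n, K n 1 = 2^n := by
      intro n
      have : c 1 = 1 := hcx 1 (by norm_num)
      simp only [hKdef, this, one_mul]
      rw [show (2:ℝ)^n = ((2^n : ℕ):ℝ) by push_cast; ring, Nat.ceil_natCast]
    simp only [hγdef, hK1, ftop, Set.iInter_const]
  have hγmono : ∀ x y : ℝ, x ≤ y → γ x ⊆ γ y := by
    intro x y hxy
    exact Set.iInter_mono fun n => hMono n (K n y) (K n x) (hKmono n x y hxy) (hKle n y)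
  -- convergence of K n x / 2^n to x
  have hpow0 : Filter.Tendsto (fun n : ℕ => (1:ℝ)/2^n) Filter.atTop (nhds 0) := by
    simpa [one_div, inv_pow] using
      tendsto_pow_atTop_nhds_zero_of_lt_one (by norm_num : (0:ℝ) ≤ 2⁻¹) (by norm_num)
  have hKconv : ∀ x ∈ Set.Icc (0:ℝ) 1,
      Filter.Tendsto (fun n => (K n x : ℝ)/2^n) Filter.atTop (nhds x) := by
    intro x hx
    have hcxx := hcx x hx
    refine tendsto_of_tendsto_of_tendsto_of_le_of_le (g := fun _ : ℕ => x)
      (h := fun n : ℕ => x + 1/2^n) tendsto_const_nhds ?_ ?_ ?_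
    · simpa using tendsto_const_nhds.add hpow0
    · intro n
      have h := Nat.le_ceil (c x * 2^n)
      rw [hcxx] at h
      rw [le_div_iff₀ (by positivity : (0:ℝ) < 2^n)]
      simpa [hKdef, hcxx] using h
    · intro n
      have h : (⌈c x * 2^n⌉₊ : ℝ) < c x * 2^n + 1 :=
        Nat.ceil_lt_add_one (by positivity)
      rw [hcxx] at h
      rw [div_le_iff₀ (by positivity : (0:ℝ) < 2^n)]
      have : (x + 1/2^n) * 2^n = x * 2^n + 1 := by field_simp
      rw [this]
      simpa [hKdef, hcxx] using h.le
  -- the distance formula for ordered pairs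
  have hdxy : ∀ x ∈ Set.Icc (0:ℝ) 1, ∀ y ∈ Set.Icc (0:ℝ) 1, x ≤ y →
      d (γ x) (γ y) = d A₀ A₁ * (y - x) := by
    intro x hx y hy hxy
    have hKxy : ∀ n, K n x ≤ K n y := fun n => hKmono n x y hxy
    have hdn : ∀ n, d (f n (K n x)) (f n (K n y)) = ((K n y : ℝ) - K n x)/2^n * d A₀ A₁ :=
      fun n => hDist n _ _ (hKxy n) (hKle n y)
    have lim1 : Filter.Tendsto (fun n => d (f n (K n x)) (f n (K n y)))
        Filter.atTop (nhds ((y - x) * d A₀ A₁)) := by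
      have h1 : Filter.Tendsto (fun n => ((K n y : ℝ)/2^n - (K n x : ℝ)/2^n) * d A₀ A₁)
          Filter.atTop (nhds ((y - x) * d A₀ A₁)) :=
        ((hKconv y hy).sub (hKconv x hx)).mul_const _
      refine h1.congr fun n => ?_
      rw [hdn n, sub_div]
    have lim2 : Filter.Tendsto (fun n => d (f n (K n x)) (f n (K n y)))
        Filter.atTop (nhds (d (γ x) (γ y))) := by
      rw [← tendsto_sub_nhds_zero_iff]
      have hb : Filter.Tendsto
          (fun n => d (f n (K n x)) (γ x) + d (f n (K n y)) (γ y))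
          Filter.atTop (nhds 0) := by
        simpa using (hγtend x).add (hγtend y)
      refine squeeze_zero_norm (fun n => ?_) hb
      have mAx := (hB n).1 _ (hKle n x)
      have mAy := (hB n).1 _ (hKle n y)
      have mγx := hγmem x
      have mγy := hγmem y
      rw [Real.norm_eq_abs, abs_sub_le_iff]
      constructor
      · have t1 := htri _ mAx _ mγx _ mAy
        have t2 := htri _ mγx _ mγy _ mAy
        have s1 := hsymm _ mγy _ mAy
        linarith
      · have t1 := htri _ mγx _ mAx _ mγy
        have t2 := htri _ mAx _ mAy _ mγy
        have s1 := hsymm _ mγx _ mAx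
        have s2 := hsymm _ mγy _ mAy
        linarith
    have := tendsto_nhds_unique lim2 lim1
    rw [this]; ring
  refine ⟨γ, fun x _ => hγmem x, hγ0, hγ1, fun x _ y _ hxy => hγmono x y hxy, ?_⟩
  intro x hx y hy
  rcases le_total x y with hxy | hyx
  · rw [hdxy x hx y hy hxy, abs_of_nonpos (by linarith), neg_sub]
  · rw [hsymm _ (hγmem x) _ (hγmem y), hdxy y hy x hx hyx,
      abs_of_nonneg (by linarith)]
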